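/- The set ℝ \ ℤ with the Euclidean metric is plastic: every non-expansive bijection φ : ℝ \ ℤ → ℝ \ ℤ is an isometry. -/

import Mathlib

def NonexpOn (φ : ℝ → ℝ) (A : Set ℝ) : Prop :=
  ∀ x ∈ A, ∀ y ∈ A, dist (φ x) (φ y) ≤ dist x y

def IsomOn (φ : ℝ → ℝ) (A : Set ℝ) : Prop :=
  ∀ x ∈ A, ∀ y ∈ A, dist (φ x) (φ y) = dist x y

def Plastic (A : Set ℝ) : Prop :=
  ∀ φ : ℝ → ℝ, Set.BijOn φ A A → NonexpOn φ A → IsomOn φ A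

open Set

private lemma mono_or_anti {f : ℝ → ℝ} {a b : ℝ} (hab : a < b) (hc : Continuous f)
    (hi : InjOn f (Ioo a b)) : StrictMonoOn f (Ioo a b) ∨ StrictAntiOn f (Ioo a b) := by
  set u := a + (b - a) / 3 with hu'
  set v := a + 2 * (b - a) / 3 with hv'
  have hu : u ∈ Ioo a b := ⟨by rw [hu']; linarith, by rw [hu']; linarith⟩
  have hv : v ∈ Ioo a b := ⟨by rw [hv']; linarith, by rw [hv']; linarith⟩
  have huv : u < v := by rw [hu', hv']; linarith
  have main : ∀ x ∈ Ioo a b, ∀ y ∈ Ioo a b, x < y →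
      (f u < f v → f x < f y) ∧ (f v < f u → f y < f x) := by
    intro x hx y hy hxy
    set c := min x u with hc'
    set d := max y v with hd'
    have hcd : Icc c d ⊆ Ioo a b := by
      intro z hz
      constructor
      · exact lt_of_lt_of_le (lt_min hx.1 hu.1) hz.1
      · exact lt_of_le_of_lt hz.2 (max_lt hy.2 hv.2)
    have hcx : c ≤ x := min_le_left _ _
    have hcu : c ≤ u := min_le_right _ _
    have hyd : y ≤ d := le_max_left _ _
    have hvd : v ≤ d := le_max_right _ _
    have hcd' : c ≤ d := hcx.trans (hxy.le.trans hyd)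
    have hxm : x ∈ Icc c d := ⟨hcx, hxy.le.trans hyd⟩
    have hym : y ∈ Icc c d := ⟨hcx.trans hxy.le, hyd⟩
    have hum : u ∈ Icc c d := ⟨hcu, huv.le.trans hvd⟩
    have hvm : v ∈ Icc c d := ⟨hcu.trans huv.le, hvd⟩
    rcases ContinuousOn.strictMonoOn_of_injOn_Icc' hcd' hc.continuousOn (hi.mono hcd) with hm | ha
    · exact ⟨fun _ => hm hxm hym hxy, fun h => absurd (hm hum hvm huv) (by linarith)⟩
    · exact ⟨fun h => absurd (ha hum hvm huv) (by linarith), fun _ => ha hxm hym hxy⟩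
  rcases lt_or_gt_of_ne (fun h => (hu.1.ne' : u ≠ a) (by
      exact absurd (hi hu hv h) huv.ne) ) with h | h
  · exact Or.inl (fun x hx y hy hxy => (main x hx y hy hxy).1 h)
  · exact Or.inr (fun x hx y hy hxy => (main x hx y hy hxy).2 h)

private lemma img_Ioo_of_strictMonoOn {f : ℝ → ℝ} {a b : ℝ} (hab : a < b)
    (hc : Continuous f) (hm : StrictMonoOn f (Ioo a b)) :
    f a < f b ∧ f '' Ioo a b = Ioo (f a) (f b) := by
  have hlt1 : ∀ x ∈ Ioo a b, f x < f b := by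
    intro x hx
    set y := (x + b) / 2 with hy'
    have hy : y ∈ Ioo a b := ⟨by rw [hy']; linarith [hx.1, hx.2], by rw [hy']; linarith [hx.2]⟩
    have hxy : x < y := by rw [hy']; linarith [hx.2]
    have h1 : f x < f y := hm hx hy hxy
    have h2 : f y ≤ f b := by
      have htd : Filter.Tendsto f (nhdsWithin b (Iio b)) (nhds (f b)) :=
        (hc.tendsto b).mono_left nhdsWithin_le_nhds
      refine ge_of_tendsto htd ?_
      filter_upwards [Ioo_mem_nhdsLT_of_mem (show b ∈ Ioc y b from ⟨hy.2, le_refl b⟩)] with z hz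
      exact (hm hy ⟨hy.1.trans hz.1, hz.2⟩ hz.1).le
    linarith
  have hlt0 : ∀ x ∈ Ioo a b, f a < f x := by
    intro x hx
    set y := (a + x) / 2 with hy'
    have hy : y ∈ Ioo a b := ⟨by rw [hy']; linarith [hx.1], by rw [hy']; linarith [hx.1, hx.2]⟩
    have hxy : y < x := by rw [hy']; linarith [hx.1]
    have h1 : f y < f x := hm hy hx hxy
    have h2 : f a ≤ f y := by
      have htd : Filter.Tendsto f (nhdsWithin a (Ioi a)) (nhds (f a)) :=
        (hc.tendsto a).mono_left nhdsWithin_le_nhds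
      refine le_of_tendsto htd ?_
      filter_upwards [Ioo_mem_nhdsGT_of_mem (show a ∈ Ico a y from ⟨le_refl a, hy.1⟩)] with z hz
      exact (hm ⟨hz.1, hz.2.trans hy.2⟩ hy hz.2).le
    linarith
  have hmid : (a + b) / 2 ∈ Ioo a b := ⟨by linarith, by linarith⟩
  have hfab : f a < f b := lt_trans (hlt0 _ hmid) (hlt1 _ hmid)
  refine ⟨hfab, Subset.antisymm ?_ ?_⟩
  · rintro _ ⟨x, hx, rfl⟩
    exact ⟨hlt0 x hx, hlt1 x hx⟩
  · intro t ht
    obtain ⟨z, hzI, hzt⟩ := intermediate_value_Icc hab.le hc.continuousOn ⟨ht.1.le, ht.2.le⟩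
    have hza : a < z := lt_of_le_of_ne hzI.1 (fun h => ht.1.ne (by rw [h]; exact hzt))
    have hzb : z < b := lt_of_le_of_ne hzI.2 (fun h => ht.2.ne' (by rw [← h]; exact hzt))
    exact ⟨z, ⟨hza, hzb⟩, hzt⟩

private lemma img_Ioo_of_strictAntiOn {f : ℝ → ℝ} {a b : ℝ} (hab : a < b)
    (hc : Continuous f) (hm : StrictAntiOn f (Ioo a b)) :
    f b < f a ∧ f '' Ioo a b = Ioo (f b) (f a) := by
  have hneg : StrictMonoOn (fun x => -f x) (Ioo a b) := by
    intro x hx y hy hxy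
    exact neg_lt_neg (hm hx hy hxy)
  obtain ⟨h1, h2⟩ := img_Ioo_of_strictMonoOn hab hc.neg hneg
  have h1' : -f a < -f b := h1
  have hba : f b < f a := by linarith
  refine ⟨hba, ?_⟩
  ext t
  constructor
  · rintro ⟨x, hx, rfl⟩
    have h4 : -f x ∈ Ioo (-f a) (-f b) := h2 ▸ mem_image_of_mem _ hx
    exact ⟨by linarith [h4.2], by linarith [h4.1]⟩
  · intro ht
    have : -t ∈ Ioo (-f a) (-f b) := ⟨by linarith [ht.2], by linarith [ht.1]⟩
    rw [← show (-f) '' Ioo a b = Ioo (-f a) (-f b) from h2] at this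
    obtain ⟨x, hx, hgx⟩ := this
    have hgx' : -f x = -t := hgx
    exact ⟨x, hx, by linarith⟩

theorem real_minus_integers_plastic :
    Plastic {x : ℝ | ∀ k : ℤ, x ≠ k} := by
  intro φ hbij hnexp
  set A : Set ℝ := {x : ℝ | ∀ k : ℤ, x ≠ k} with hA'
  have hAIoo : ∀ n : ℤ, Ioo (n : ℝ) ((n : ℝ) + 1) ⊆ A := by
    intro n x hx k hk
    subst hk
    have h1 : n < k := by exact_mod_cast hx.1
    have h2 : (k : ℝ) < ((n + 1 : ℤ) : ℝ) := by push_cast; exact hx.2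
    have h2' : k < n + 1 := by exact_mod_cast h2
    omega
  have hAfloor : ∀ z ∈ A, z ∈ Ioo ((⌊z⌋ : ℝ)) ((⌊z⌋ : ℝ) + 1) := by
    intro z hz
    exact ⟨(Int.floor_le z).lt_of_ne (fun h => hz ⌊z⌋ h.symm), Int.lt_floor_add_one z⟩
  -- Lipschitz extension ψ of φ
  have hlip : LipschitzOnWith 1 φ A := by
    rw [lipschitzOnWith_iff_dist_le_mul]
    intro x hx y hy
    simpa using hnexp x hx y hy
  obtain ⟨ψ, hψlip, hEq⟩ := hlip.extend_real
  have hψc : Continuous ψ := hψlip.continuous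
  have habs : ∀ a b : ℝ, |ψ a - ψ b| ≤ |a - b| := by
    intro a b
    have := hψlip.dist_le_mul a b
    simpa [Real.dist_eq] using this
  have hψA : ∀ n : ℤ, ∀ x ∈ Ioo (n : ℝ) ((n : ℝ) + 1), ψ x ∈ A := by
    intro n x hx
    have hxA := hAIoo n hx
    have : φ x ∈ A := hbij.mapsTo hxA
    rwa [hEq hxA] at this
  have hinjA : Set.InjOn ψ A := by
    intro x hx y hy h
    exact hbij.injOn hx hy (by rw [hEq hx, hEq hy]; exact h)
  -- same floor within an interval
  have hfloor : ∀ n : ℤ, ∀ x ∈ Ioo (n : ℝ) ((n : ℝ) + 1), ∀ y ∈ Ioo (n : ℝ) ((n : ℝ) + 1),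
      x ≤ y → ⌊ψ x⌋ = ⌊ψ y⌋ := by
    intro n x hx y hy hxy
    by_contra hne
    rcases lt_or_gt_of_ne hne with h | h
    · set k := ⌊ψ y⌋ with hk'
      have h1 : ψ x < (k : ℝ) := by
        have := Int.lt_floor_add_one (ψ x)
        have h2 : ((⌊ψ x⌋ : ℝ) + 1) ≤ (k : ℝ) := by exact_mod_cast h
        linarith
      have h2 : (k : ℝ) ≤ ψ y := Int.floor_le _
      obtain ⟨z, hz, hzk⟩ := intermediate_value_Icc hxy hψc.continuousOn
        (⟨h1.le, h2⟩ : (k : ℝ) ∈ Icc (ψ x) (ψ y))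
      have hzI : z ∈ Ioo (n : ℝ) ((n : ℝ) + 1) := ⟨lt_of_lt_of_le hx.1 hz.1, lt_of_le_of_lt hz.2 hy.2⟩
      exact (hψA n z hzI) k hzk
    · set k := ⌊ψ x⌋ with hk'
      have h1 : ψ y < (k : ℝ) := by
        have := Int.lt_floor_add_one (ψ y)
        have h2 : ((⌊ψ y⌋ : ℝ) + 1) ≤ (k : ℝ) := by exact_mod_cast h
        linarith
      have h2 : (k : ℝ) ≤ ψ x := Int.floor_le _
      obtain ⟨z, hz, hzk⟩ := intermediate_value_Icc' hxy hψc.continuousOn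
        (⟨h1.le, h2⟩ : (k : ℝ) ∈ Icc (ψ y) (ψ x))
      have hzI : z ∈ Ioo (n : ℝ) ((n : ℝ) + 1) := ⟨lt_of_lt_of_le hx.1 hz.1, lt_of_le_of_lt hz.2 hy.2⟩
      exact (hψA n z hzI) k hzk
  set σ : ℤ → ℤ := fun n => ⌊ψ ((n : ℝ) + 1 / 2)⌋ with hσ'
  have hmid : ∀ n : ℤ, ((n : ℝ) + 1 / 2) ∈ Ioo (n : ℝ) ((n : ℝ) + 1) := by
    intro n; constructor <;> [linarith; linarith]
  have hσmem : ∀ n : ℤ, ∀ x ∈ Ioo (n : ℝ) ((n : ℝ) + 1), ψ x ∈ Ioo ((σ n : ℝ)) ((σ n : ℝ) + 1) := by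
    intro n x hx
    have hfl : ⌊ψ x⌋ = σ n := by
      rcases le_total x ((n : ℝ) + 1 / 2) with h | h
      · exact hfloor n x hx _ (hmid n) h
      · exact (hfloor n _ (hmid n) x hx h).symm
    have hne := hψA n x hx
    constructor
    · exact (hfl ▸ Int.floor_le (ψ x)).lt_of_ne (fun h => hne (σ n) h.symm)
    · have := Int.lt_floor_add_one (ψ x)
      rw [hfl] at this
      exact_mod_cast this
  -- image of each interval is an open interval
  have himg : ∀ n : ℤ, (ψ '' Ioo (n : ℝ) ((n : ℝ) + 1)
      = Ioo (min (ψ (n : ℝ)) (ψ ((n : ℝ) + 1))) (max (ψ (n : ℝ)) (ψ ((n : ℝ) + 1))))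
      ∧ ψ (n : ℝ) ≠ ψ ((n : ℝ) + 1) := by
    intro n
    have hab : (n : ℝ) < (n : ℝ) + 1 := by linarith
    rcases mono_or_anti hab hψc (hinjA.mono (hAIoo n)) with hm | ha
    · obtain ⟨hlt, him⟩ := img_Ioo_of_strictMonoOn hab hψc hm
      exact ⟨by rw [him, min_eq_left hlt.le, max_eq_right hlt.le], hlt.ne⟩
    · obtain ⟨hlt, him⟩ := img_Ioo_of_strictAntiOn hab hψc ha
      exact ⟨by rw [him, min_eq_right hlt.le, max_eq_left hlt.le], hlt.ne'⟩
  -- surjectivity cover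
  have hcover : ∀ m : ℤ, ∀ w ∈ Ioo (m : ℝ) ((m : ℝ) + 1),
      ∃ n : ℤ, σ n = m ∧ w ∈ ψ '' Ioo (n : ℝ) ((n : ℝ) + 1) := by
    intro m w hw
    have hwA : w ∈ A := hAIoo m hw
    obtain ⟨z, hzA, hzw⟩ := hbij.surjOn hwA
    set n := ⌊z⌋ with hn'
    have hz : z ∈ Ioo (n : ℝ) ((n : ℝ) + 1) := hAfloor z hzA
    have hψz : ψ z = w := (hEq hzA).symm.trans hzw
    have h1 : ψ z ∈ Ioo ((σ n : ℝ)) ((σ n : ℝ) + 1) := hσmem n z hz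
    rw [hψz] at h1
    have e1 : ⌊w⌋ = σ n := Int.floor_eq_iff.mpr ⟨h1.1.le, by exact_mod_cast h1.2⟩
    have e2 : ⌊w⌋ = m := Int.floor_eq_iff.mpr ⟨hw.1.le, by exact_mod_cast hw.2⟩
    exact ⟨n, by omega, ⟨z, hz, hψz⟩⟩
  -- floor of a point in Ioo n (n+1) is n
  have hfl' : ∀ n : ℤ, ∀ x ∈ Ioo (n : ℝ) ((n : ℝ) + 1), ⌊x⌋ = n := by
    intro n x hx
    exact Int.floor_eq_iff.mpr ⟨hx.1.le, by exact_mod_cast hx.2⟩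
  -- key step: image of interval n is exactly (σ n, σ n + 1), and fibres of σ are singletons
  have hkey : ∀ n : ℤ, (ψ '' Ioo (n : ℝ) ((n : ℝ) + 1) = Ioo ((σ n : ℝ)) ((σ n : ℝ) + 1))
      ∧ ∀ n' : ℤ, σ n' = σ n → n' = n := by
    intro n
    set m := σ n with hm'
    set U : Set ℝ := ψ '' Ioo (n : ℝ) ((n : ℝ) + 1) with hU'
    set V : Set ℝ := ⋃ (n' : ℤ) (_ : n' ≠ n), ψ '' Ioo (n' : ℝ) ((n' : ℝ) + 1) with hV'
    have hUopen : IsOpen U := by rw [hU', (himg n).1]; exact isOpen_Ioo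
    have hVopen : IsOpen V := isOpen_iUnion fun n' => isOpen_iUnion fun _ => by
      rw [(himg n').1]; exact isOpen_Ioo
    have hUs : U ⊆ Ioo ((m : ℝ)) ((m : ℝ) + 1) := by
      rintro _ ⟨x, hx, rfl⟩
      exact hσmem n x hx
    have hsUV : Ioo ((m : ℝ)) ((m : ℝ) + 1) ⊆ U ∪ V := by
      intro w hw
      obtain ⟨n₁, hn₁, hw₁⟩ := hcover m w hw
      by_cases h : n₁ = n
      · subst h; exact Or.inl hw₁
      · exact Or.inr (mem_iUnion.mpr ⟨n₁, mem_iUnion.mpr ⟨h, hw₁⟩⟩)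
    have hdisj : ∀ w, w ∈ U → w ∈ V → False := by
      intro w hwU hwV
      obtain ⟨x, hx, hwx⟩ := hwU
      obtain ⟨n', hn'⟩ := mem_iUnion.mp hwV
      obtain ⟨hne, hw'⟩ := mem_iUnion.mp hn'
      obtain ⟨x', hx', hwx'⟩ := hw'
      have hxx : x = x' := hinjA (hAIoo n hx) (hAIoo n' hx') (hwx.trans hwx'.symm)
      subst hxx
      have e1 := hfl' n x hx
      have e2 := hfl' n' x hx'
      exact hne (by omega)
    have hVempty : ¬ (Ioo ((m : ℝ)) ((m : ℝ) + 1) ∩ V).Nonempty := by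
      intro hVne
      have hUne : (Ioo ((m : ℝ)) ((m : ℝ) + 1) ∩ U).Nonempty :=
        ⟨ψ ((n : ℝ) + 1 / 2), hσmem n _ (hmid n), mem_image_of_mem ψ (hmid n)⟩
      obtain ⟨w, hws, hwUV⟩ := (isPreconnected_Ioo (a := (m : ℝ)) (b := (m : ℝ) + 1))
        U V hUopen hVopen hsUV hUne hVne
      exact hdisj w hwUV.1 hwUV.2
    constructor
    · refine Subset.antisymm hUs ?_
      intro w hw
      rcases hsUV hw with h | h
      · exact h
      · exact absurd ⟨w, hw, h⟩ hVempty
    · intro n' hσn'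
      by_contra hne
      have h1 : ψ ((n' : ℝ) + 1 / 2) ∈ V :=
        mem_iUnion.mpr ⟨n', mem_iUnion.mpr ⟨hne, mem_image_of_mem _ (hmid n')⟩⟩
      have h2 : ψ ((n' : ℝ) + 1 / 2) ∈ Ioo ((m : ℝ)) ((m : ℝ) + 1) := by
        have := hσmem n' _ (hmid n')
        rwa [hσn'] at this
      exact hVempty ⟨_, h2, h1⟩
  -- endpoints
  have hend : ∀ n : ℤ, min (ψ (n : ℝ)) (ψ ((n : ℝ) + 1)) = (σ n : ℝ)
      ∧ max (ψ (n : ℝ)) (ψ ((n : ℝ) + 1)) = (σ n : ℝ) + 1 := by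
    intro n
    have h3 : Ioo (min (ψ (n : ℝ)) (ψ ((n : ℝ) + 1))) (max (ψ (n : ℝ)) (ψ ((n : ℝ) + 1)))
        = Ioo ((σ n : ℝ)) ((σ n : ℝ) + 1) := by
      rw [← (himg n).1]; exact (hkey n).1
    have hmm : min (ψ (n : ℝ)) (ψ ((n : ℝ) + 1)) < max (ψ (n : ℝ)) (ψ ((n : ℝ) + 1)) :=
      min_lt_max.mpr (himg n).2
    have hσlt : (σ n : ℝ) < (σ n : ℝ) + 1 := by linarith
    constructor
    · have e1 : min (ψ (n : ℝ)) (ψ ((n : ℝ) + 1))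
          = sInf (Ioo (min (ψ (n : ℝ)) (ψ ((n : ℝ) + 1))) (max (ψ (n : ℝ)) (ψ ((n : ℝ) + 1)))) :=
        (csInf_Ioo hmm).symm
      rw [h3, csInf_Ioo hσlt] at e1
      exact e1
    · have e1 : max (ψ (n : ℝ)) (ψ ((n : ℝ) + 1))
          = sSup (Ioo (min (ψ (n : ℝ)) (ψ ((n : ℝ) + 1))) (max (ψ (n : ℝ)) (ψ ((n : ℝ) + 1)))) :=
        (csSup_Ioo hmm).symm
      rw [h3, csSup_Ioo hσlt] at e1
      exact e1
  -- each interval: endpoint values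
  have hstep : ∀ n : ℤ, (ψ (n : ℝ) = (σ n : ℝ) ∧ ψ ((n : ℝ) + 1) = (σ n : ℝ) + 1)
      ∨ (ψ (n : ℝ) = (σ n : ℝ) + 1 ∧ ψ ((n : ℝ) + 1) = (σ n : ℝ)) := by
    intro n
    rcases le_total (ψ (n : ℝ)) (ψ ((n : ℝ) + 1)) with h | h
    · left
      constructor
      · rw [← min_eq_left h]; exact (hend n).1
      · rw [← max_eq_right h]; exact (hend n).2
    · right
      constructor
      · rw [← max_eq_left h]; exact (hend n).2
      · rw [← min_eq_right h]; exact (hend n).1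
  set E : ℤ → ℝ := fun n => ψ ((n : ℝ) + 1) - ψ (n : ℝ) with hE'
  have hcast : ∀ n : ℤ, ((n + 1 : ℤ) : ℝ) = (n : ℝ) + 1 := by intro n; push_cast; ring
  have hprop : ∀ n : ℤ, E (n + 1) = E n := by
    intro n
    have hEn1 : E (n + 1) = ψ ((n : ℝ) + 1 + 1) - ψ ((n : ℝ) + 1) := by
      rw [hE']; dsimp only; rw [hcast n]
    rcases hstep n with ⟨h1, h2⟩ | ⟨h1, h2⟩ <;>
      · rcases hstep (n + 1) with ⟨h3, h4⟩ | ⟨h3, h4⟩ <;>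
        · rw [hcast n] at h3 h4
          first
          | (rw [hE'] ; dsimp only; rw [hcast n]; linarith)
          | (exfalso
             have hσeq : σ (n + 1) = σ n := by
               have : ((σ (n + 1) : ℤ) : ℝ) = ((σ n : ℤ) : ℝ) := by linarith
               exact_mod_cast this
             have := (hkey n).2 (n + 1) hσeq
             omega)
  have hE1 : ∀ n : ℤ, E n = 1 ∨ E n = -1 := by
    intro n
    rcases hstep n with ⟨h1, h2⟩ | ⟨h1, h2⟩
    · left; rw [hE']; dsimp only; linarith
    · right; rw [hE']; dsimp only; linarith
  set ε : ℝ := E 0 with hε'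
  have hε : ε = 1 ∨ ε = -1 := hE1 0
  have hEconst : ∀ n : ℤ, E n = ε := by
    intro n
    induction n using Int.induction_on with
    | zero => rfl
    | succ i ih => rw [hprop i]; exact ih
    | pred i ih =>
      have := hprop (-(i : ℤ) - 1)
      rw [show (-(i : ℤ) - 1 + 1) = -(i : ℤ) by ring] at this
      rw [← this]; exact ih
  -- within-interval formula
  have hIcc : ∀ n : ℤ, ∀ x ∈ Icc (n : ℝ) ((n : ℝ) + 1), ψ x = ψ (n : ℝ) + ε * (x - n) := by
    intro n x hx
    have hab1 := habs x (n : ℝ)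
    have hab2 := habs ((n : ℝ) + 1) x
    rw [abs_of_nonneg (by linarith [hx.1] : (0:ℝ) ≤ x - n)] at hab1
    rw [abs_of_nonneg (by linarith [hx.2] : (0:ℝ) ≤ (n : ℝ) + 1 - x)] at hab2
    have l1 := (abs_le.mp hab1).2
    have l2 := (abs_le.mp hab1).1
    have l3 := (abs_le.mp hab2).2
    have l4 := (abs_le.mp hab2).1
    have hEn : ψ ((n : ℝ) + 1) - ψ (n : ℝ) = ε := hEconst n
    rcases hε with h | h <;> rw [h] at hEn ⊢ <;> linarith
  have hψZ : ∀ n : ℤ, ψ (n : ℝ) = ψ 0 + ε * n := by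
    intro n
    induction n using Int.induction_on with
    | zero => simp
    | succ i ih =>
      have hEi : ψ (((i : ℤ) : ℝ) + 1) - ψ ((i : ℤ) : ℝ) = ε := hEconst i
      rw [hcast i]
      push_cast
      push_cast at ih hEi
      linarith
    | pred i ih =>
      have hEi : ψ ((( -(i : ℤ) - 1 : ℤ) : ℝ) + 1) - ψ (((-(i : ℤ) - 1 : ℤ)) : ℝ) = ε :=
        hEconst (-(i : ℤ) - 1)
      have hc1 : (((-(i : ℤ) - 1 : ℤ)) : ℝ) + 1 = ((-(i : ℤ) : ℤ) : ℝ) := by push_cast; ring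
      rw [hc1] at hEi
      push_cast
      push_cast at ih hEi
      linarith
  have hglob : ∀ x : ℝ, ψ x = ψ 0 + ε * x := by
    intro x
    have hx : x ∈ Icc ((⌊x⌋ : ℝ)) ((⌊x⌋ : ℝ) + 1) := ⟨Int.floor_le x, (Int.lt_floor_add_one x).le⟩
    rw [hIcc ⌊x⌋ x hx, hψZ ⌊x⌋]
    ring
  -- conclude
  intro x hx y hy
  rw [show φ x = ψ x from hEq hx, show φ y = ψ y from hEq hy,
    Real.dist_eq, Real.dist_eq, hglob x, hglob y]
  have : (ψ 0 + ε * x) - (ψ 0 + ε * y) = ε * (x - y) := by ring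
  rw [this, abs_mul]
  rcases hε with h | h <;> rw [h] <;> simp
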